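/- For t ∈ (0,1], the function φ_t defined piecewise by φ_t(x) = log(1+e^x) for x ≤ 0, φ_t(x) = log 2 + x/2 for x ∈ [0,t], and φ_t(x) = log(1+e^{x-t}) + t/2 for x ≥ t, is convex on ℝ and C^{1,1}: its derivative exists everywhere and is Lipschitz continuous with Lipschitz constant at most 1/4. -/

import Mathlib

open scoped NNReal

open Real Set

private noncomputable def sig (y : ℝ) : ℝ := Real.exp y / (1 + Real.exp y)

private lemma one_add_exp_pos (y : ℝ) : (0:ℝ) < 1 + Real.exp y := by positivity

private lemma sig_hasDeriv (y : ℝ) :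
    HasDerivAt sig (Real.exp y / (1 + Real.exp y) ^ 2) y := by
  have h := (Real.hasDerivAt_exp y).div ((hasDerivAt_const y (1:ℝ)).add (Real.hasDerivAt_exp y))
    (one_add_exp_pos y).ne'
  refine HasDerivAt.congr_deriv (f := sig) h ?_
  simp only [Pi.add_apply]
  ring

private lemma sig_lipschitz : LipschitzWith (1/4 : ℝ≥0) sig := by
  apply lipschitzWith_of_nnnorm_deriv_le (fun y => (sig_hasDeriv y).differentiableAt)
  intro y
  rw [(sig_hasDeriv y).deriv]
  rw [← NNReal.coe_le_coe] at *
  push_cast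
  rw [Real.norm_eq_abs, abs_of_nonneg (by positivity)]
  rw [div_le_div_iff₀ (by positivity) (by norm_num)]
  nlinarith [sq_nonneg (1 - Real.exp y), Real.exp_pos y]

private lemma sig_mono : Monotone sig := by
  intro a b hab
  unfold sig
  rw [div_le_div_iff₀ (one_add_exp_pos a) (one_add_exp_pos b)]
  have := Real.exp_le_exp.2 hab
  nlinarith

private lemma log_hasDeriv (y : ℝ) :
    HasDerivAt (fun z => Real.log (1 + Real.exp z)) (sig y) y := by
  have := ((hasDerivAt_const y (1:ℝ)).add (Real.hasDerivAt_exp y)).log (one_add_exp_pos y).ne'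
  simpa [sig] using this

private lemma aff_hasDeriv (y : ℝ) :
    HasDerivAt (fun z => Real.log 2 + z / 2) (1/2 : ℝ) y := by
  simpa using ((hasDerivAt_id y).div_const 2).const_add (Real.log 2)

private lemma sig_zero : sig 0 = 1/2 := by simp [sig]; norm_num

theorem geodesic_is_C11 (t : ℝ) (ht : t ∈ Set.Ioc (0:ℝ) 1) (φ : ℝ → ℝ)
    (h1 : ∀ x ≤ (0:ℝ), φ x = Real.log (1 + Real.exp x))
    (h2 : ∀ x ∈ Set.Icc (0:ℝ) t, φ x = Real.log 2 + x / 2)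
    (h3 : ∀ x ≥ t, φ x = Real.log (1 + Real.exp (x - t)) + t / 2) :
    ConvexOn ℝ Set.univ φ ∧ Differentiable ℝ φ ∧
      LipschitzWith (1/4 : ℝ≥0) (deriv φ) := by
  obtain ⟨ht0, _⟩ := ht
  set c : ℝ → ℝ := fun x => max (min x 0) (x - t) with hc
  have hc1 : ∀ x ≤ (0:ℝ), c x = x := by
    intro x hx
    simp only [hc, min_eq_left hx]
    exact max_eq_left (by linarith)
  have hc2 : ∀ x, 0 ≤ x → x ≤ t → c x = 0 := by
    intro x hx hxt
    simp only [hc, min_eq_right hx]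
    exact max_eq_left (by linarith)
  have hc3 : ∀ x, t ≤ x → c x = x - t := by
    intro x hx
    simp only [hc]
    exact max_eq_right ((min_le_right x 0).trans (by linarith))
  set g : ℝ → ℝ := fun x => sig (c x) with hg
  -- the shifted log function, derivative of it
  have shift_hasDeriv : ∀ y : ℝ,
      HasDerivAt (fun z => Real.log (1 + Real.exp (z - t)) + t / 2) (sig (y - t)) y := by
    intro y
    have := (log_hasDeriv (y - t)).comp y ((hasDerivAt_id y).sub_const t)
    simpa using this.add_const (t / 2)
  -- differentiability everywhere with derivative g
  have hd : ∀ x, HasDerivAt φ (g x) x := by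
    intro x
    rcases lt_trichotomy x 0 with hx | hx | hx
    · -- x < 0
      have : φ =ᶠ[nhds x] fun z => Real.log (1 + Real.exp z) := by
        filter_upwards [Iio_mem_nhds hx] with y hy
        exact h1 y (le_of_lt hy)
      have hgx : g x = sig x := by show sig (c x) = sig x; rw [hc1 x hx.le]
      rw [hgx]
      exact (log_hasDeriv x).congr_of_eventuallyEq this
    · -- x = 0 : junction
      subst hx
      have hleft : HasDerivWithinAt φ (1/2 : ℝ) (Iic 0) 0 := by
        rw [← sig_zero]
        exact ((log_hasDeriv 0).hasDerivWithinAt).congr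
          (fun y hy => h1 y hy) (h1 0 le_rfl)
      have hright : HasDerivWithinAt φ (1/2 : ℝ) (Ici 0) 0 := by
        have h' : HasDerivWithinAt φ (1/2 : ℝ) (Icc 0 t) 0 :=
          ((aff_hasDeriv 0).hasDerivWithinAt).congr
            (fun y hy => h2 y hy) (h2 0 ⟨le_rfl, ht0.le⟩)
        apply h'.mono_of_mem_nhdsWithin
        rw [← Set.Ici_inter_Iic]
        exact inter_mem_nhdsWithin _ (Iic_mem_nhds ht0)
      have := hleft.union hright
      rw [Iic_union_Ici] at this
      have h05 : g 0 = 1/2 := by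
        show sig (c 0) = 1/2; rw [hc2 0 le_rfl ht0.le]; exact sig_zero
      rw [h05]
      exact hasDerivWithinAt_univ.1 this
    rcases lt_trichotomy x t with hxt | hxt | hxt
    · -- 0 < x < t
      have : φ =ᶠ[nhds x] fun z => Real.log 2 + z / 2 := by
        filter_upwards [Ioo_mem_nhds hx hxt] with y hy
        exact h2 y ⟨hy.1.le, hy.2.le⟩
      have h05 : g x = 1/2 := by
        show sig (c x) = 1/2; rw [hc2 x hx.le hxt.le]; exact sig_zero
      rw [h05]
      exact (aff_hasDeriv x).congr_of_eventuallyEq this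
    · -- x = t : junction
      rw [hxt]
      have hleft : HasDerivWithinAt φ (1/2 : ℝ) (Iic t) t := by
        have h' : HasDerivWithinAt φ (1/2 : ℝ) (Icc 0 t) t :=
          ((aff_hasDeriv t).hasDerivWithinAt).congr
            (fun y hy => h2 y hy) (h2 t ⟨ht0.le, le_rfl⟩)
        apply h'.mono_of_mem_nhdsWithin
        rw [show Icc (0:ℝ) t = Iic t ∩ Ici 0 by rw [inter_comm, Set.Ici_inter_Iic]]
        exact inter_mem_nhdsWithin _ (Ici_mem_nhds ht0)
      have hright : HasDerivWithinAt φ (1/2 : ℝ) (Ici t) t := by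
        have := (shift_hasDeriv t).hasDerivWithinAt (s := Ici t)
        rw [show t - t = 0 by ring, sig_zero] at this
        exact this.congr (fun y hy => h3 y hy) (h3 t le_rfl)
      have := hleft.union hright
      rw [Iic_union_Ici] at this
      have h05 : g t = 1/2 := by
        show sig (c t) = 1/2; rw [hc2 t ht0.le le_rfl]; exact sig_zero
      rw [h05]
      exact hasDerivWithinAt_univ.1 this
    · -- t < x
      have : φ =ᶠ[nhds x] fun z => Real.log (1 + Real.exp (z - t)) + t / 2 := by
        filter_upwards [Ioi_mem_nhds hxt] with y hy
        exact h3 y hy.le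
      have hgx : g x = sig (x - t) := by show sig (c x) = _; rw [hc3 x hxt.le]
      rw [hgx]
      exact (shift_hasDeriv x).congr_of_eventuallyEq this
  have hdiff : Differentiable ℝ φ := fun x => (hd x).differentiableAt
  have hderiv : deriv φ = g := funext fun x => (hd x).deriv
  have hcmono : Monotone c := by
    intro a b hab
    exact max_le_max (min_le_min hab le_rfl) (by linarith)
  have hgmono : Monotone g := fun a b hab => sig_mono (hcmono hab)
  refine ⟨?_, hdiff, ?_⟩
  · exact Monotone.convexOn_univ_of_deriv hdiff (hderiv ▸ hgmono)
  · rw [hderiv]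
    have hsub : LipschitzWith 1 (fun x : ℝ => x - t) := by
      apply LipschitzWith.of_dist_le_mul
      intro a b
      simp [Real.dist_eq, sub_sub_sub_cancel_right]
    have hclip : LipschitzWith 1 c := by
      have := (LipschitzWith.min_const LipschitzWith.id (0:ℝ)).max hsub
      simpa using this
    have := sig_lipschitz.comp hclip
    rw [mul_one] at this
    exact this
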